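/- arXiv:1311.3742 — 2 statements merged into one kernel-verified Lean document; each statement's English description precedes it below -/
import Mathlib

section
/- Let q ≥ 2 and define G_q : ℝ^d → ℝ by G_q(A) = (1/q)(1 + |A|²)^{q/2}. Then there exists a constant c_q > 0, depending only on q and d, such that for all A, B ∈ ℝ^d one has (∇G_q(A) − ∇G_q(B)) · (A − B) ≥ c_q (1 + |A|² + |B|²)^{(q−2)/2} |A − B|². -/
/-- Strong monotonicity of the gradient of `G_q(A) = (1/q)(1+|A|²)^{q/2}`:
there is `c_q > 0` with
`(∇G_q(A) − ∇G_q(B)) · (A − B) ≥ c_q (1+|A|²+|B|²)^{(q−2)/2} |A−B|²`. -/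
theorem gradient_Gq_strong_monotonicity (d : ℕ) (q : ℝ) (hq : 2 ≤ q) :
    ∃ c : ℝ, 0 < c ∧ ∀ A B : EuclideanSpace ℝ (Fin d),
      c * (1 + ‖A‖ ^ 2 + ‖B‖ ^ 2) ^ ((q - 2) / 2) * ‖A - B‖ ^ 2 ≤
        (inner ℝ ((1 + ‖A‖ ^ 2) ^ ((q - 2) / 2) • A - (1 + ‖B‖ ^ 2) ^ ((q - 2) / 2) • B)
          (A - B) : ℝ) := by
  set s := (q - 2) / 2 with hs_def
  have hs : 0 ≤ s := div_nonneg (by linarith) (by norm_num)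
  refine ⟨(1/2) * (2:ℝ) ^ (-s), by positivity, fun A B => ?_⟩
  have h1A : (0:ℝ) < 1 + ‖A‖^2 := by positivity
  have h1B : (0:ℝ) < 1 + ‖B‖^2 := by positivity
  set α := (1 + ‖A‖^2) ^ s with hα
  set β := (1 + ‖B‖^2) ^ s with hβ
  have hαpos : 0 < α := Real.rpow_pos_of_pos h1A s
  have hβpos : 0 < β := Real.rpow_pos_of_pos h1B s
  have hid : (inner ℝ (α • A - β • B) (A - B) : ℝ)
      = ((α+β)/2) * ‖A-B‖^2 + ((α-β)*(‖A‖^2-‖B‖^2))/2 := by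
    have h1 : (inner ℝ (α • A - β • B) (A - B) : ℝ)
        = α * ‖A‖^2 - (α+β) * inner ℝ A B + β * ‖B‖^2 := by
      simp only [inner_sub_left, inner_sub_right, real_inner_smul_left,
        real_inner_self_eq_norm_sq, real_inner_comm B A]
      ring
    have h2 : ‖A-B‖^2 = ‖A‖^2 - 2*inner ℝ A B + ‖B‖^2 := by
      rw [norm_sub_sq_real]
    rw [h1, h2]; ring
  rw [hid]
  have hmono : 0 ≤ (α-β)*(‖A‖^2-‖B‖^2) := by
    rcases le_total (‖A‖^2) (‖B‖^2) with h | h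
    · have hab : α ≤ β := Real.rpow_le_rpow (le_of_lt h1A) (by linarith) hs
      nlinarith
    · have hab : β ≤ α := Real.rpow_le_rpow (le_of_lt h1B) (by linarith) hs
      nlinarith
  have h2s : (0:ℝ) < (2:ℝ)^s := Real.rpow_pos_of_pos (by norm_num) s
  have hsum : (1/2) * (2:ℝ)^(-s) * (1 + ‖A‖^2 + ‖B‖^2)^s ≤ (α+β)/2 := by
    have hle : (1 + ‖A‖^2 + ‖B‖^2)^s ≤ (2:ℝ)^s * (α + β) := by
      rcases le_total (‖A‖^2) (‖B‖^2) with h | h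
      · have hlin : (1 + ‖A‖^2 + ‖B‖^2 : ℝ) ≤ 2 * (1 + ‖B‖^2) := by linarith
        calc (1 + ‖A‖^2 + ‖B‖^2)^s ≤ ((2:ℝ) * (1 + ‖B‖^2))^s :=
              Real.rpow_le_rpow (by positivity) hlin hs
          _ = (2:ℝ)^s * β := Real.mul_rpow (by norm_num) (le_of_lt h1B)
          _ ≤ (2:ℝ)^s * (α + β) := by nlinarith
      · have hlin : (1 + ‖A‖^2 + ‖B‖^2 : ℝ) ≤ 2 * (1 + ‖A‖^2) := by linarith
        calc (1 + ‖A‖^2 + ‖B‖^2)^s ≤ ((2:ℝ) * (1 + ‖A‖^2))^s :=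
              Real.rpow_le_rpow (by positivity) hlin hs
          _ = (2:ℝ)^s * α := Real.mul_rpow (by norm_num) (le_of_lt h1A)
          _ ≤ (2:ℝ)^s * (α + β) := by nlinarith
    have hinv : (2:ℝ)^(-s) * (2:ℝ)^s = 1 := by
      rw [← Real.rpow_add (by norm_num : (0:ℝ) < 2)]; simp
    have h2sneg : (0:ℝ) < (2:ℝ)^(-s) := Real.rpow_pos_of_pos (by norm_num) (-s)
    nlinarith [mul_le_mul_of_nonneg_left hle (le_of_lt h2sneg)]
  have hnn : (0:ℝ) ≤ ‖A-B‖^2 := by positivity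
  nlinarith [mul_le_mul_of_nonneg_right hsum hnn]
end

section
/- Let q ≥ 2 and G_q(A) = (1/q)(1 + |A|²)^{q/2} for A ∈ ℝ^d. There exists c_q > 0 such that for all A, B ∈ ℝ^d: G_q(B) − G_q(A) − (1 + |A|²)^{(q−2)/2} A · (B − A) ≥ c_q (1 + |A|² + |B|²)^{(q−2)/2} |A − B|². -/
/-- Gradient/convexity inequality for `h(x) = (1/q)(1+x)^{q/2}`. -/
lemma bern_aux (q : ℝ) (hq : 2 ≤ q) {s t : ℝ} (hs : 0 ≤ s) (ht : 0 ≤ t) :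
    (1/q) * (1+s)^(q/2) + (1/2) * (1+s)^((q-2)/2) * (t - s) ≤ (1/q) * (1+t)^(q/2) := by
  have hq0 : (0:ℝ) < q := by linarith
  have hs1 : (0:ℝ) < 1 + s := by linarith
  have ht1 : (0:ℝ) < 1 + t := by linarith
  have hr : 1 ≤ q/2 := by linarith
  have hx : (-1:ℝ) ≤ (t - s)/(1+s) := by
    rw [neg_le, ← neg_div, div_le_one hs1]; linarith
  have hb := one_add_mul_self_le_rpow_one_add hx hr
  have h1 : 1 + (t-s)/(1+s) = (1+t)/(1+s) := by field_simp; ring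
  rw [h1, Real.div_rpow ht1.le hs1.le] at hb
  have hP : (0:ℝ) < (1+s)^((q-2)/2) := Real.rpow_pos_of_pos hs1 _
  have hS : (1+s)^(q/2) = (1+s)^((q-2)/2) * (1+s) := by
    have h2 : q/2 = (q-2)/2 + 1 := by ring
    rw [h2, Real.rpow_add hs1, Real.rpow_one]
  have hS0 : (0:ℝ) < (1+s)^(q/2) := Real.rpow_pos_of_pos hs1 _
  have key2 : (1+s)^((q-2)/2)*(1+s) + q/2*(t-s)*(1+s)^((q-2)/2) ≤ (1+t)^(q/2) := by
    have h3 := (le_div_iff₀ hS0).mp hb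
    rw [hS] at h3
    calc (1+s)^((q-2)/2)*(1+s) + q/2*(t-s)*(1+s)^((q-2)/2)
        = (1 + q / 2 * ((t - s) / (1 + s))) * ((1+s)^((q-2)/2)*(1+s)) := by
          field_simp
      _ ≤ (1+t)^(q/2) := h3
  have hmul := mul_le_mul_of_nonneg_left key2 (by positivity : (0:ℝ) ≤ 1/q)
  have e : (1/q)*((1+s)^((q-2)/2)*(1+s) + q/2*(t-s)*(1+s)^((q-2)/2))
      = (1/q)*((1+s)^((q-2)/2)*(1+s)) + (1/2)*(1+s)^((q-2)/2)*(t-s) := by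
    field_simp
  rw [e] at hmul
  rw [hS]
  linarith

set_option maxHeartbeats 1000000 in
/-- Core real-variable estimate for the case `q > 2`. -/
lemma Gq_core (q : ℝ) (hq2 : 2 < q) {s t D : ℝ} (hs : 0 ≤ s) (ht : 0 ≤ t)
    (hD : 0 ≤ D) (hD2 : D ≤ 2 * (s + t)) :
    min (1 / (2 * (3:ℝ) ^ ((q-2)/2)))
        ((1 - (4/7:ℝ) ^ ((q-2)/2)) / (48 * (2:ℝ) ^ ((q-2)/2)))
      * (1 + s + t) ^ ((q-2)/2) * D
    ≤ (1/q) * (1+t) ^ (q/2) - (1/q) * (1+s) ^ (q/2)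
        - (1/2) * (1+s) ^ ((q-2)/2) * (t - s) + (1/2) * (1+s) ^ ((q-2)/2) * D := by
  have hq0 : (0:ℝ) < q := by linarith
  have hp : (0:ℝ) < (q-2)/2 := by linarith
  have hP : (0:ℝ) < (1+s) ^ ((q-2)/2) := Real.rpow_pos_of_pos (by linarith) _
  have hW : (0:ℝ) < (1+s+t) ^ ((q-2)/2) := Real.rpow_pos_of_pos (by linarith) _
  have h3 : (0:ℝ) < (3:ℝ) ^ ((q-2)/2) := Real.rpow_pos_of_pos (by norm_num) _
  have hm : (0:ℝ) < (2:ℝ) ^ ((q-2)/2) := Real.rpow_pos_of_pos (by norm_num) _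
  have hk1 : (4/7:ℝ) ^ ((q-2)/2) < 1 :=
    Real.rpow_lt_one (by norm_num) (by norm_num) hp
  have hc1 : (0:ℝ) < 1 / (2 * (3:ℝ) ^ ((q-2)/2)) := by positivity
  have hc2 : (0:ℝ) < (1 - (4/7:ℝ) ^ ((q-2)/2)) / (48 * (2:ℝ) ^ ((q-2)/2)) :=
    div_pos (by linarith) (by positivity)
  have hR := bern_aux q hq2.le hs ht
  rcases le_or_gt t (1 + 2*s) with hcase | hcase
  · -- case 1 : quadratic term suffices
    have hW3 : (1+s+t) ^ ((q-2)/2) ≤ (3:ℝ) ^ ((q-2)/2) * (1+s) ^ ((q-2)/2) := by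
      rw [← Real.mul_rpow (by norm_num) (by linarith)]
      exact Real.rpow_le_rpow (by linarith) (by linarith) hp.le
    have st1 : min (1 / (2 * (3:ℝ) ^ ((q-2)/2)))
          ((1 - (4/7:ℝ) ^ ((q-2)/2)) / (48 * (2:ℝ) ^ ((q-2)/2)))
          * (1 + s + t) ^ ((q-2)/2) * D
        ≤ (1 / (2 * (3:ℝ) ^ ((q-2)/2))) * (1 + s + t) ^ ((q-2)/2) * D :=
      mul_le_mul_of_nonneg_right
        (mul_le_mul_of_nonneg_right (min_le_left _ _) hW.le) hD
    have st2 : (1 / (2 * (3:ℝ) ^ ((q-2)/2))) * (1 + s + t) ^ ((q-2)/2) * D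
        ≤ (1 / (2 * (3:ℝ) ^ ((q-2)/2))) * ((3:ℝ) ^ ((q-2)/2) * (1+s) ^ ((q-2)/2)) * D :=
      mul_le_mul_of_nonneg_right (mul_le_mul_of_nonneg_left hW3 hc1.le) hD
    have st3 : (1 / (2 * (3:ℝ) ^ ((q-2)/2))) * ((3:ℝ) ^ ((q-2)/2) * (1+s) ^ ((q-2)/2)) * D
        = (1/2) * (1+s) ^ ((q-2)/2) * D := by
      field_simp
    linarith [st1, st2, hR]
  · -- case 2 : convexity gain
    have hu : (0:ℝ) ≤ (s + 3*t)/4 := by linarith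
    have hQ : (0:ℝ) < (1+(s + 3*t)/4) ^ ((q-2)/2) := Real.rpow_pos_of_pos (by linarith) _
    have b1 := bern_aux q hq2.le hs hu
    have b2 := bern_aux q hq2.le hu ht
    have hts : (0:ℝ) < t - s := by linarith
    have hRlow : (1/8) * ((1+(s + 3*t)/4) ^ ((q-2)/2) - (1+s) ^ ((q-2)/2)) * (t - s)
        ≤ (1/q) * (1+t) ^ (q/2) - (1/q) * (1+s) ^ (q/2)
            - (1/2) * (1+s) ^ ((q-2)/2) * (t - s) := by
      nlinarith [b1, b2]
    have hPQ : (1+s) ^ ((q-2)/2)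
        ≤ (4/7:ℝ) ^ ((q-2)/2) * (1+(s + 3*t)/4) ^ ((q-2)/2) := by
      rw [← Real.mul_rpow (by norm_num) (by linarith)]
      exact Real.rpow_le_rpow (by linarith) (by linarith) hp.le
    have hWQ : (1+s+t) ^ ((q-2)/2)
        ≤ (2:ℝ) ^ ((q-2)/2) * (1+(s + 3*t)/4) ^ ((q-2)/2) := by
      rw [← Real.mul_rpow (by norm_num) (by linarith)]
      exact Real.rpow_le_rpow (by linarith) (by linarith) hp.le
    have hD6 : D ≤ 6 * (t - s) := by linarith
    have st0 : min (1 / (2 * (3:ℝ) ^ ((q-2)/2)))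
          ((1 - (4/7:ℝ) ^ ((q-2)/2)) / (48 * (2:ℝ) ^ ((q-2)/2)))
          * (1 + s + t) ^ ((q-2)/2) * D
        ≤ ((1 - (4/7:ℝ) ^ ((q-2)/2)) / (48 * (2:ℝ) ^ ((q-2)/2)))
          * (1 + s + t) ^ ((q-2)/2) * D :=
      mul_le_mul_of_nonneg_right
        (mul_le_mul_of_nonneg_right (min_le_right _ _) hW.le) hD
    have st1 : ((1 - (4/7:ℝ) ^ ((q-2)/2)) / (48 * (2:ℝ) ^ ((q-2)/2)))
          * (1 + s + t) ^ ((q-2)/2) * D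
        ≤ ((1 - (4/7:ℝ) ^ ((q-2)/2)) / (48 * (2:ℝ) ^ ((q-2)/2)))
          * (1 + s + t) ^ ((q-2)/2) * (6 * (t - s)) :=
      mul_le_mul_of_nonneg_left hD6 (by positivity)
    have st2 : ((1 - (4/7:ℝ) ^ ((q-2)/2)) / (48 * (2:ℝ) ^ ((q-2)/2)))
          * (1 + s + t) ^ ((q-2)/2) * (6 * (t - s))
        ≤ ((1 - (4/7:ℝ) ^ ((q-2)/2)) / (48 * (2:ℝ) ^ ((q-2)/2)))
          * ((2:ℝ) ^ ((q-2)/2) * (1+(s + 3*t)/4) ^ ((q-2)/2)) * (6 * (t - s)) :=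
      mul_le_mul_of_nonneg_right (mul_le_mul_of_nonneg_left hWQ hc2.le) (by linarith)
    have st3 : ((1 - (4/7:ℝ) ^ ((q-2)/2)) / (48 * (2:ℝ) ^ ((q-2)/2)))
          * ((2:ℝ) ^ ((q-2)/2) * (1+(s + 3*t)/4) ^ ((q-2)/2)) * (6 * (t - s))
        = ((1 - (4/7:ℝ) ^ ((q-2)/2)) * (1+(s + 3*t)/4) ^ ((q-2)/2)) * (t - s) / 8 := by
      field_simp; ring
    have st4 : ((1 - (4/7:ℝ) ^ ((q-2)/2)) * (1+(s + 3*t)/4) ^ ((q-2)/2)) * (t - s) / 8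
        ≤ (1/8) * ((1+(s + 3*t)/4) ^ ((q-2)/2) - (1+s) ^ ((q-2)/2)) * (t - s) := by
      have h5 : 0 ≤ ((4/7:ℝ) ^ ((q-2)/2) * (1+(s + 3*t)/4) ^ ((q-2)/2)
          - (1+s) ^ ((q-2)/2)) * (t - s) :=
        mul_nonneg (by linarith [hPQ]) hts.le
      linarith [h5]
    have hPD : 0 ≤ (1+s) ^ ((q-2)/2) * D := mul_nonneg hP.le hD
    linarith [st0, st1, st2, st3, st4, hRlow, hPD]

/-- Uniform convexity estimate for `G_q(A) = (1/q)(1+|A|²)^{q/2}`: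
`G_q(B) − G_q(A) − ∇G_q(A)·(B−A) ≥ c_q (1+|A|²+|B|²)^{(q−2)/2} |A−B|²`. -/
theorem Gq_uniform_convexity (d : ℕ) (q : ℝ) (hq : 2 ≤ q) :
    ∃ c : ℝ, 0 < c ∧ ∀ A B : EuclideanSpace ℝ (Fin d),
      c * (1 + ‖A‖ ^ 2 + ‖B‖ ^ 2) ^ ((q - 2) / 2) * ‖A - B‖ ^ 2 ≤
        (1 / q) * (1 + ‖B‖ ^ 2) ^ (q / 2) - (1 / q) * (1 + ‖A‖ ^ 2) ^ (q / 2)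
          - (1 + ‖A‖ ^ 2) ^ ((q - 2) / 2) * (inner ℝ A (B - A) : ℝ) := by
  have hip : ∀ A B : EuclideanSpace ℝ (Fin d),
      (inner ℝ A (B - A) : ℝ) = (‖B‖^2 - ‖A‖^2 - ‖A - B‖^2) / 2 := by
    intro A B
    have h0 := norm_sub_sq_real A B
    rw [inner_sub_right, real_inner_self_eq_norm_sq]
    linarith
  have hD2 : ∀ A B : EuclideanSpace ℝ (Fin d),
      ‖A - B‖ ^ 2 ≤ 2 * (‖A‖^2 + ‖B‖^2) := by
    intro A B
    have h0 := norm_sub_sq_real A B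
    have h1 := (abs_le.mp (abs_real_inner_le_norm A B)).1
    nlinarith [sq_nonneg (‖A‖ - ‖B‖)]
  rcases eq_or_lt_of_le hq with hq2 | hq2
  · -- q = 2
    subst hq2
    refine ⟨1/2, by norm_num, fun A B => ?_⟩
    rw [hip A B, show ((2:ℝ)-2)/2 = 0 by norm_num, show (2:ℝ)/2 = 1 by norm_num,
      Real.rpow_zero, Real.rpow_zero, Real.rpow_one, Real.rpow_one]
    ring_nf
    exact le_rfl
  · -- q > 2
    refine ⟨min (1 / (2 * (3:ℝ) ^ ((q-2)/2)))
        ((1 - (4/7:ℝ) ^ ((q-2)/2)) / (48 * (2:ℝ) ^ ((q-2)/2))), ?_, fun A B => ?_⟩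
    · refine lt_min (by positivity) (div_pos ?_ (by positivity))
      have := Real.rpow_lt_one (by norm_num : (0:ℝ) ≤ 4/7) (by norm_num) (by linarith : (0:ℝ) < (q-2)/2)
      linarith
    · have hcore := Gq_core q hq2 (s := ‖A‖^2) (t := ‖B‖^2) (D := ‖A - B‖^2)
        (by positivity) (by positivity) (by positivity) (hD2 A B)
      rw [hip A B]
      have expand : (1 + ‖A‖^2) ^ ((q-2)/2) * ((‖B‖^2 - ‖A‖^2 - ‖A - B‖^2) / 2)
          = (1/2) * (1 + ‖A‖^2) ^ ((q-2)/2) * (‖B‖^2 - ‖A‖^2)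
            - (1/2) * (1 + ‖A‖^2) ^ ((q-2)/2) * ‖A - B‖^2 := by ring
      linarith [hcore, expand]
end
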